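/- Let f : S² → ℝ be continuous and let ν > 0 be such that for every p ∈ S² and every unit tangent vector u at p there exists a unit tangent vector v at p with ⟨u,v⟩ > 0 and ∫₀^π f(γ_{p,v}(t)) dt < −ν. Then there exists ε > 0 such that for all p, q ∈ S² with π − ε ≤ ρ(p,q) ≤ π there exists m ∈ S² with 0 < ρ(p,m) = ρ(m,q), ρ(p,m) + ρ(m,q) ≤ π, and I_f(p,m) + I_f(m,q) < −ν. -/

import Mathlib

open scoped RealInnerProductSpace
open Real

noncomputable section

/-- Euclidean 3-space. -/
abbrev E3 : Type := EuclideanSpace ℝ (Fin 3)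

/-- The unit sphere S² in ℝ³. -/
def sphere2 : Set E3 := {x : E3 | ‖x‖ = 1}

/-- The round (geodesic) distance ρ(p,q) = arccos⟨p,q⟩ on S². -/
def rho (p q : E3) : ℝ := Real.arccos ⟪p, q⟫

/-- `UnitTangent p v` : `v` is a unit tangent vector at `p`. -/
def UnitTangent (p v : E3) : Prop := ‖v‖ = 1 ∧ ⟪p, v⟫ = 0

/-- The unit-speed great-circle arc γ_{p,v}(t) = (cos t)·p + (sin t)·v. -/
def geo (p v : E3) (t : ℝ) : E3 := (Real.cos t) • p + (Real.sin t) • v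
/-- The minimizing great-circle arc from `x` to `y` (for `0 < ρ(x,y) < π`):
`c_{x,y}(t) = (sin(ρ(x,y) − t)·x + sin(t)·y) / sin(ρ(x,y))`. -/
def arcPath (x y : E3) (t : ℝ) : E3 :=
  (Real.sin (rho x y - t) / Real.sin (rho x y)) • x +
    (Real.sin t / Real.sin (rho x y)) • y

/-- `I_h(x,y) = ∫₀^{ρ(x,y)} h(c_{x,y}(t)) dt`. -/
def Iint (h : E3 → ℝ) (x y : E3) : ℝ :=
  ∫ t in (0:ℝ)..(rho x y), h (arcPath x y t)
section Helpers

open Filter MeasureTheory intervalIntegral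

lemma mem_sphere2 {x : E3} : x ∈ sphere2 ↔ ‖x‖ = 1 := Iff.rfl

lemma inner_le_one' {x y : E3} (hx : ‖x‖ = 1) (hy : ‖y‖ = 1) : |⟪x, y⟫| ≤ 1 := by
  have := abs_real_inner_le_norm x y
  rw [hx, hy] at this; simpa using this

lemma cos_rho {x y : E3} (hx : ‖x‖ = 1) (hy : ‖y‖ = 1) : Real.cos (rho x y) = ⟪x, y⟫ := by
  have h := inner_le_one' hx hy
  exact Real.cos_arccos (by linarith [abs_le.1 h |>.1]) (by linarith [abs_le.1 h |>.2])

lemma sin_rho_nonneg (x y : E3) : 0 ≤ Real.sin (rho x y) :=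
  Real.sin_nonneg_of_nonneg_of_le_pi (Real.arccos_nonneg _) (Real.arccos_le_pi _)

lemma norm_sq_combo (x y : E3) (a b : ℝ) :
    ‖a • x + b • y‖ ^ 2 = a ^ 2 * ‖x‖ ^ 2 + 2 * (a * b * ⟪x, y⟫) + b ^ 2 * ‖y‖ ^ 2 := by
  rw [norm_add_sq_real, inner_smul_left, inner_smul_right, norm_smul, norm_smul,
    Real.norm_eq_abs, Real.norm_eq_abs, mul_pow, mul_pow, sq_abs, sq_abs]
  simp only [starRingEnd_apply, star_trivial]
  ring

lemma norm_geo {p v : E3} (hp : ‖p‖ = 1) (hv : ‖v‖ = 1) (hpv : ⟪p, v⟫ = 0) (t : ℝ) :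
    ‖geo p v t‖ = 1 := by
  have h : ‖geo p v t‖ ^ 2 = 1 := by
    rw [geo, norm_sq_combo, hpv, hp, hv]
    nlinarith [Real.sin_sq_add_cos_sq t]
  nlinarith [norm_nonneg (geo p v t)]

lemma norm_arcPath {x y : E3} (hx : ‖x‖ = 1) (hy : ‖y‖ = 1)
    (hs : Real.sin (rho x y) ≠ 0) (t : ℝ) : ‖arcPath x y t‖ = 1 := by
  have hc : Real.cos (rho x y) = ⟪x, y⟫ := cos_rho hx hy
  have h : ‖arcPath x y t‖ ^ 2 = 1 := by
    rw [arcPath, norm_sq_combo, hx, hy, ← hc]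
    have hsub : Real.sin (rho x y - t)
        = Real.sin (rho x y) * Real.cos t - Real.cos (rho x y) * Real.sin t := Real.sin_sub _ _
    rw [hsub]
    field_simp
    linear_combination Real.sin (rho x y) ^ 2 * Real.sin_sq_add_cos_sq t - Real.sin t ^ 2 * Real.sin_sq_add_cos_sq (rho x y)
  nlinarith [norm_nonneg (arcPath x y t)]

lemma exists_unitTangent (p : E3) : ∃ v : E3, ‖v‖ = 1 ∧ ⟪p, v⟫ = 0 := by
  have hdim : 0 < Module.finrank ℝ ((ℝ ∙ p)ᗮ : Submodule ℝ E3) := by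
    have h1 : Module.finrank ℝ (ℝ ∙ p) + Module.finrank ℝ ((ℝ ∙ p)ᗮ : Submodule ℝ E3)
        = Module.finrank ℝ E3 := Submodule.finrank_add_finrank_orthogonal _
    have h2 : Module.finrank ℝ (ℝ ∙ p) ≤ 1 := by
      simpa using finrank_span_le_card ({p} : Set E3)
    have h3 : Module.finrank ℝ E3 = 3 := by simp [finrank_euclideanSpace]
    omega
  have hbot : ((ℝ ∙ p)ᗮ : Submodule ℝ E3) ≠ ⊥ := by
    intro hb
    rw [hb] at hdim
    simp at hdim
  obtain ⟨w, hw, hw0⟩ := Submodule.exists_mem_ne_zero_of_ne_bot hbot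
  refine ⟨‖w‖⁻¹ • w, ?_, ?_⟩
  · rw [norm_smul, norm_inv, norm_norm]
    field_simp [norm_ne_zero_iff.2 hw0]
  · rw [real_inner_smul_right]
    have := (Submodule.mem_orthogonal _ w).1 hw p (Submodule.mem_span_singleton_self p)
    rw [this]; ring

lemma exists_e2 {p q : E3} (hp : ‖p‖ = 1) (hq : ‖q‖ = 1) :
    ∃ w : E3, ‖w‖ = 1 ∧ ⟪p, w⟫ = 0 ∧
      q = Real.cos (rho p q) • p + Real.sin (rho p q) • w := by
  set c := Real.cos (rho p q) with hc
  set s := Real.sin (rho p q) with hs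
  have hcq : c = ⟪p, q⟫ := cos_rho hp hq
  have hcq2 : c = ⟪q, p⟫ := by rw [real_inner_comm]; exact hcq
  have hkey : ‖q - c • p‖ ^ 2 = s ^ 2 := by
    rw [norm_sub_sq_real, inner_smul_right, norm_smul, Real.norm_eq_abs, mul_pow, sq_abs,
      hp, hq, ← hcq2]
    have := Real.sin_sq_add_cos_sq (rho p q)
    rw [← hc, ← hs] at this
    nlinarith
  by_cases h0 : s = 0
  · obtain ⟨w, hw1, hw2⟩ := exists_unitTangent p
    refine ⟨w, hw1, hw2, ?_⟩
    have hz : q - c • p = 0 := by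
      have h2 : ‖q - c • p‖ ^ 2 = 0 := by rw [hkey, h0]; ring
      have h3 : ‖q - c • p‖ = 0 := by nlinarith [norm_nonneg (q - c • p)]
      exact norm_eq_zero.1 h3
    rw [h0, zero_smul, add_zero]
    exact sub_eq_zero.1 hz
  · have hspos : 0 < s := lt_of_le_of_ne (sin_rho_nonneg p q) (Ne.symm h0)
    refine ⟨s⁻¹ • (q - c • p), ?_, ?_, ?_⟩
    · rw [norm_smul, Real.norm_eq_abs, abs_inv, abs_of_pos hspos]
      have hn : ‖q - c • p‖ = s := by
        nlinarith [norm_nonneg (q - c • p)]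
      rw [hn]; field_simp
    · rw [real_inner_smul_right, inner_sub_right, inner_smul_right, real_inner_self_eq_norm_sq,
        hp, ← hcq]
      ring_nf
    · rw [smul_smul, mul_inv_cancel₀ h0, one_smul]
      abel

lemma tendsto_rho {α : Type*} {l : Filter α} (x y : α → E3) (x0 y0 : E3)
    (hx : Tendsto x l (nhds x0)) (hy : Tendsto y l (nhds y0)) :
    Tendsto (fun n => rho (x n) (y n)) l (nhds (rho x0 y0)) := by
  have hi : Tendsto (fun n => (⟪x n, y n⟫ : ℝ)) l (nhds (⟪x0, y0⟫ : ℝ)) := hx.inner hy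
  simp only [rho]
  exact (Real.continuous_arccos.tendsto _).comp hi

lemma Iint_rescale (g : E3 → ℝ) (a b : E3) :
    Iint g a b = rho a b • ∫ s in (0:ℝ)..1, g (arcPath a b (rho a b * s)) := by
  rw [Iint]
  have h := intervalIntegral.smul_integral_comp_mul_left (a := (0:ℝ)) (b := (1:ℝ))
    (fun t => g (arcPath a b t)) (rho a b)
  rw [mul_zero, mul_one] at h
  exact h.symm

lemma arcPath_cont (a b : E3) (c : ℝ) : Continuous fun s : ℝ => arcPath a b (c * s) := by
  unfold arcPath
  fun_prop

set_option maxHeartbeats 1000000 in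
lemma tendsto_Iint {g : E3 → ℝ} (hg : Continuous g) (x y : ℕ → E3) (x0 y0 : E3)
    (hx : Tendsto x atTop (nhds x0)) (hy : Tendsto y atTop (nhds y0))
    (h0 : Real.sin (rho x0 y0) ≠ 0) :
    Tendsto (fun n => Iint g (x n) (y n)) atTop (nhds (Iint g x0 y0)) := by
  have hρ : Tendsto (fun n => rho (x n) (y n)) atTop (nhds (rho x0 y0)) :=
    tendsto_rho x y x0 y0 hx hy
  have hsin : Tendsto (fun n => Real.sin (rho (x n) (y n))) atTop (nhds (Real.sin (rho x0 y0))) :=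
    (Real.continuous_sin.tendsto _).comp hρ
  have hδ : 0 < Real.sin (rho x0 y0) := lt_of_le_of_ne (sin_rho_nonneg _ _) (Ne.symm h0)
  set δ : ℝ := Real.sin (rho x0 y0) / 2 with hδdef
  have hδ0 : 0 < δ := by positivity
  set R : ℝ := (‖x0‖ + ‖y0‖ + 2) / δ with hRdef
  obtain ⟨C, hC⟩ := (isCompact_closedBall (0:E3) R).exists_bound_of_continuousOn hg.continuousOn
  simp only [Iint_rescale g]
  refine Tendsto.smul hρ ?_
  refine intervalIntegral.tendsto_integral_filter_of_dominated_convergence (fun _ => C) ?_ ?_ ?_ ?_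
  · refine Eventually.of_forall fun n => ?_
    exact ((hg.comp (arcPath_cont _ _ _)).aestronglyMeasurable)
  · have e1 : ∀ᶠ n in atTop, δ ≤ Real.sin (rho (x n) (y n)) :=
      hsin.eventually_const_le (by linarith)
    have e2 : ∀ᶠ n in atTop, ‖x n‖ ≤ ‖x0‖ + 1 :=
      (hx.norm).eventually_le_const (by linarith)
    have e3 : ∀ᶠ n in atTop, ‖y n‖ ≤ ‖y0‖ + 1 :=
      (hy.norm).eventually_le_const (by linarith)
    filter_upwards [e1, e2, e3] with n h1 h2 h3
    refine Eventually.of_forall fun s _ => ?_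
    have hnorm : ‖arcPath (x n) (y n) (rho (x n) (y n) * s)‖ ≤ R := by
      set ρn := rho (x n) (y n)
      have hsn : 0 < Real.sin ρn := lt_of_lt_of_le hδ0 h1
      have b1 : |Real.sin (ρn - ρn * s) / Real.sin ρn| ≤ 1 / δ := by
        rw [abs_div, abs_of_pos hsn]
        apply div_le_div₀ (by norm_num) (abs_sin_le_one _) hδ0 h1
      have b2 : |Real.sin (ρn * s) / Real.sin ρn| ≤ 1 / δ := by
        rw [abs_div, abs_of_pos hsn]
        apply div_le_div₀ (by norm_num) (abs_sin_le_one _) hδ0 h1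
      calc ‖arcPath (x n) (y n) (ρn * s)‖
          ≤ ‖(Real.sin (ρn - ρn * s) / Real.sin ρn) • x n‖
            + ‖(Real.sin (ρn * s) / Real.sin ρn) • y n‖ := norm_add_le _ _
        _ ≤ (1/δ) * (‖x0‖ + 1) + (1/δ) * (‖y0‖ + 1) := by
            rw [norm_smul, norm_smul, Real.norm_eq_abs, Real.norm_eq_abs]
            exact add_le_add (mul_le_mul b1 h2 (norm_nonneg _) (by positivity))
              (mul_le_mul b2 h3 (norm_nonneg _) (by positivity))
        _ = R := by rw [hRdef]; field_simp; ring
    exact hC _ (mem_closedBall_zero_iff.2 hnorm)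
  · exact intervalIntegrable_const
  · refine Eventually.of_forall fun s _ => ?_
    refine (hg.tendsto _).comp ?_
    have hρs : Tendsto (fun n => rho (x n) (y n) * s) atTop (nhds (rho x0 y0 * s)) :=
      hρ.mul_const s
    have c1 : Tendsto (fun n => Real.sin (rho (x n) (y n) - rho (x n) (y n) * s)
        / Real.sin (rho (x n) (y n))) atTop
        (nhds (Real.sin (rho x0 y0 - rho x0 y0 * s) / Real.sin (rho x0 y0))) :=
      (((Real.continuous_sin.tendsto _).comp (hρ.sub hρs))).div hsin h0
    have c2 : Tendsto (fun n => Real.sin (rho (x n) (y n) * s) / Real.sin (rho (x n) (y n)))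
        atTop (nhds (Real.sin (rho x0 y0 * s) / Real.sin (rho x0 y0))) :=
      ((Real.continuous_sin.tendsto _).comp hρs).div hsin h0
    exact (c1.smul hx).add (c2.smul hy)

lemma geo_cont (p v : E3) : Continuous fun t : ℝ => geo p v t := by
  unfold geo; fun_prop

lemma arcPath_pv {p v : E3} (hpv : ⟪p, v⟫ = 0) (t : ℝ) :
    arcPath p v t = geo p v t := by
  have h1 : rho p v = π / 2 := by rw [rho, hpv, Real.arccos_zero]
  rw [arcPath, geo, h1, Real.sin_pi_div_two, Real.sin_pi_div_two_sub]
  simp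

lemma arcPath_vnp {p v : E3} (hpv : ⟪p, v⟫ = 0) (t : ℝ) :
    arcPath v (-p) t = geo p v (t + π / 2) := by
  have h0 : ⟪v, -p⟫ = (0:ℝ) := by
    rw [inner_neg_right, real_inner_comm, hpv, neg_zero]
  have h1 : rho v (-p) = π / 2 := by rw [rho, h0, Real.arccos_zero]
  rw [arcPath, geo, h1, Real.sin_pi_div_two, Real.sin_pi_div_two_sub,
    Real.cos_add_pi_div_two, Real.sin_add_pi_div_two]
  simp [smul_neg]
  abel

lemma Iint_split {g : E3 → ℝ} (hg : Continuous g) {p v : E3} (hpv : ⟪p, v⟫ = 0) :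
    Iint g p v + Iint g v (-p) = ∫ t in (0:ℝ)..π, g (geo p v t) := by
  have h1 : rho p v = π / 2 := by rw [rho, hpv, Real.arccos_zero]
  have h0 : ⟪v, -p⟫ = (0:ℝ) := by
    rw [inner_neg_right, real_inner_comm, hpv, neg_zero]
  have h2 : rho v (-p) = π / 2 := by rw [rho, h0, Real.arccos_zero]
  have e1 : Iint g p v = ∫ t in (0:ℝ)..(π/2), g (geo p v t) := by
    rw [Iint, h1]
    exact intervalIntegral.integral_congr fun t _ => by rw [arcPath_pv hpv]
  have e2 : Iint g v (-p) = ∫ t in (π/2:ℝ)..π, g (geo p v t) := by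
    rw [Iint, h2]
    have e3 : (∫ t in (0:ℝ)..(π/2), g (geo p v (t + π/2)))
        = ∫ t in (0 + π/2 : ℝ)..(π/2 + π/2), g (geo p v t) :=
      intervalIntegral.integral_comp_add_right (fun t => g (geo p v t)) (π/2)
    rw [intervalIntegral.integral_congr (fun t _ => by rw [arcPath_vnp hpv]), e3]
    norm_num
  rw [e1, e2]
  exact intervalIntegral.integral_add_adjacent_intervals
    ((hg.comp (geo_cont p v)).intervalIntegrable _ _)
    ((hg.comp (geo_cont p v)).intervalIntegrable _ _)

end Helpers

open Filter MeasureTheory in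
set_option maxHeartbeats 2000000 in
/-- If `f` is continuous and integrates below `-ν` over some great half-circle
in every open semicircle of directions at every point, then for some `ε > 0`,
any two points at round distance in `[π-ε, π]` can be joined by a two-arc
piecewise geodesic of total length at most `π`, with equal-length legs, over
which `f` integrates below `-ν`. -/
theorem exists_short_broken_geodesic_with_negative_integral
    (f : E3 → ℝ) (hf : ContinuousOn f sphere2) (ν : ℝ) (hν : 0 < ν)
    (h : ∀ p ∈ sphere2, ∀ u : E3, UnitTangent p u →
      ∃ v : E3, UnitTangent p v ∧ 0 < ⟪u, v⟫ ∧
        (∫ t in (0:ℝ)..π, f (geo p v t)) < -ν) :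
    ∃ ε > (0:ℝ), ∀ p ∈ sphere2, ∀ q ∈ sphere2,
      π - ε ≤ rho p q → rho p q ≤ π →
      ∃ m ∈ sphere2, 0 < rho p m ∧ rho p m = rho m q ∧
        rho p m + rho m q ≤ π ∧ Iint f p m + Iint f m q < -ν := by
  by_contra hcon
  push_neg at hcon
  -- Tietze extension of f
  have hclosed : IsClosed sphere2 := isClosed_eq continuous_norm continuous_const
  obtain ⟨G, hG⟩ := ContinuousMap.exists_restrict_eq (Y := ℝ) hclosed ⟨_, hf.restrict⟩
  set g : E3 → ℝ := ⇑G with hgdef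
  have hg : Continuous g := G.continuous
  have hgf : ∀ z ∈ sphere2, g z = f z := by
    intro z hz
    exact DFunLike.congr_fun hG (⟨z, hz⟩ : sphere2)
  -- choose bad sequences
  have hcon' : ∀ n : ℕ, ∃ p ∈ sphere2, ∃ q ∈ sphere2,
      π - 1/((n:ℝ)+1) ≤ rho p q ∧ rho p q ≤ π ∧
      ∀ m ∈ sphere2, 0 < rho p m → rho p m = rho m q → rho p m + rho m q ≤ π →
        -ν ≤ Iint f p m + Iint f m q := fun n => hcon (1/((n:ℝ)+1)) (by positivity)
  choose p hp q hq hge hle hfail using hcon'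
  have hpn : ∀ n, ‖p n‖ = 1 := fun n => hp n
  have hqn : ∀ n, ‖q n‖ = 1 := fun n => hq n
  -- compactness of the sphere
  have hSc : IsCompact sphere2 := by
    have hs : sphere2 = Metric.sphere (0:E3) 1 := by
      ext z; simp [sphere2, mem_sphere_iff_norm]
    rw [hs]
    exact isCompact_sphere _ _
  -- e2 auxiliary direction
  choose w hw1 hw2 hw3 using fun n : ℕ => exists_e2 (hpn n) (hqn n)
  -- subsequences
  obtain ⟨p0, hp0, φ1, hφ1, hpt1⟩ := hSc.tendsto_subseq hp
  obtain ⟨q0, hq0, φ2, hφ2, hqt2⟩ := hSc.tendsto_subseq (x := fun n => q (φ1 n))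
    (fun n => hq (φ1 n))
  obtain ⟨e2, he2mem, φ3, hφ3, hwt3⟩ := hSc.tendsto_subseq
    (x := fun n => w (φ1 (φ2 n))) (fun n => hw1 (φ1 (φ2 n)))
  set φ : ℕ → ℕ := fun k => φ1 (φ2 (φ3 k)) with hφdef
  have hφmono : StrictMono φ := hφ1.comp (hφ2.comp hφ3)
  have hPt : Tendsto (fun k => p (φ k)) atTop (nhds p0) :=
    hpt1.comp ((hφ2.comp hφ3).tendsto_atTop)
  have hQt : Tendsto (fun k => q (φ k)) atTop (nhds q0) :=
    hqt2.comp (hφ3.tendsto_atTop)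
  have hWt : Tendsto (fun k => w (φ k)) atTop (nhds e2) := hwt3
  have hp0n : ‖p0‖ = 1 := hp0
  have hq0n : ‖q0‖ = 1 := hq0
  -- x_k bound
  have hxk : ∀ k : ℕ, π - rho (p (φ k)) (q (φ k)) ≤ 1/((k:ℝ)+1) := by
    intro k
    have h1 := hge (φ k)
    have h2 : (1:ℝ)/((φ k:ℝ)+1) ≤ 1/((k:ℝ)+1) := by
      apply one_div_le_one_div_of_le (by positivity)
      have h3 : k ≤ φ k := hφmono.le_apply
      have := Nat.cast_le (α := ℝ) |>.2 h3
      linarith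
    linarith
  -- limit distance is π
  have hρt : Tendsto (fun k => rho (p (φ k)) (q (φ k))) atTop (nhds (rho p0 q0)) :=
    tendsto_rho _ _ _ _ hPt hQt
  have hinv0 : Tendsto (fun k : ℕ => 1/((k:ℝ)+1)) atTop (nhds 0) :=
    tendsto_one_div_add_atTop_nhds_zero_nat
  have hρπ : rho p0 q0 = π := by
    refine le_antisymm (Real.arccos_le_pi _) ?_
    have haux : Tendsto (fun k : ℕ => π - 1/((k:ℝ)+1)) atTop (nhds π) := by
      have := tendsto_const_nhds (x := π) (f := atTop (α := ℕ)) |>.sub hinv0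
      simpa using this
    exact le_of_tendsto_of_tendsto' haux hρt fun k => by linarith [hxk k]
  have hpq0 : ⟪p0, q0⟫ = -1 := by
    have hc := cos_rho hp0n hq0n
    rw [hρπ, Real.cos_pi] at hc
    linarith
  have hq0e : q0 = -p0 := by
    have hz : ‖p0 + q0‖^2 = 0 := by
      rw [norm_add_sq_real, hp0n, hq0n, hpq0]; ring
    have hz2 : p0 + q0 = 0 := norm_eq_zero.1 (by nlinarith [norm_nonneg (p0+q0)])
    exact eq_neg_of_add_eq_zero_left (by rw [add_comm]; exact hz2)
  -- e2 is a unit tangent at p0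
  have he2n : ‖e2‖ = 1 := he2mem
  have he2o : ⟪p0, e2⟫ = 0 := by
    have ht : Tendsto (fun k => (⟪p (φ k), w (φ k)⟫:ℝ)) atTop (nhds ⟪p0, e2⟫) :=
      hPt.inner hWt
    have hzz : (fun k => (⟪p (φ k), w (φ k)⟫:ℝ)) = fun _ => (0:ℝ) :=
      funext fun k => hw2 (φ k)
    rw [hzz] at ht
    exact (tendsto_nhds_unique ht tendsto_const_nhds)
  -- the good direction v
  obtain ⟨v, ⟨hv1, hv2⟩, hvc, hvint⟩ := h p0 hp0 e2 ⟨he2n, he2o⟩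
  set c0 : ℝ := ⟪e2, v⟫ with hc0
  -- the midpoint sequence
  set D : ℕ → E3 := fun k => p (φ k) - q (φ k) with hD
  set wk : ℕ → E3 := fun k => v - (⟪v, D k⟫ / ‖D k‖^2) • D k with hwk
  set m : ℕ → E3 := fun k => ‖wk k‖⁻¹ • wk k with hm
  have hPQlt : ∀ k, ⟪p (φ k), q (φ k)⟫ < 1 := by
    intro k
    refine Real.arccos_pos.1 ?_
    show (0:ℝ) < rho (p (φ k)) (q (φ k))
    have h1 := hxk k
    have h2 : (1:ℝ)/((k:ℝ)+1) ≤ 1 := by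
      rw [div_le_one (by positivity)]
      have : (0:ℝ) ≤ (k:ℝ) := Nat.cast_nonneg k
      linarith
    nlinarith [Real.pi_gt_three]
  have hDsq : ∀ k, ‖D k‖^2 = 2 - 2 * ⟪p (φ k), q (φ k)⟫ := by
    intro k
    rw [hD]
    rw [norm_sub_sq_real, hpn, hqn]
    ring
  have hDpos : ∀ k, 0 < ‖D k‖^2 := fun k => by
    rw [hDsq k]; linarith [hPQlt k]
  have horth : ∀ k, ⟪wk k, D k⟫ = (0:ℝ) := by
    intro k
    have hb : ‖D k‖^2 ≠ 0 := (hDpos k).ne'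
    rw [hwk]
    rw [inner_sub_left, real_inner_smul_left, real_inner_self_eq_norm_sq]
    field_simp
    rw [div_self (by intro h0; apply hb; rw [h0]; ring), sub_self, mul_zero]
  have hmPQ : ∀ k, (⟪p (φ k), m k⟫:ℝ) = ⟪m k, q (φ k)⟫ := by
    intro k
    have h1 : (⟪m k, D k⟫:ℝ) = 0 := by
      rw [hm, real_inner_smul_left, horth k, mul_zero]
    rw [hD] at h1
    rw [inner_sub_right] at h1
    have := sub_eq_zero.1 h1
    rw [real_inner_comm (m k) (p (φ k))]
    linarith [this]
  have hreq : ∀ k, rho (p (φ k)) (m k) = rho (m k) (q (φ k)) := by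
    intro k
    rw [rho, rho, hmPQ k]
  -- convergence of midpoints
  have hDt : Tendsto D atTop (nhds (p0 - q0)) := hPt.sub hQt
  have hvp0 : (⟪v, p0⟫:ℝ) = 0 := by rw [real_inner_comm]; exact hv2
  have hvq0 : (⟪v, q0⟫:ℝ) = 0 := by
    rw [hq0e, inner_neg_right, hvp0, neg_zero]
  have hvD : (⟪v, p0 - q0⟫:ℝ) = 0 := by
    rw [inner_sub_right, hvp0, hvq0]; ring
  have hnum : Tendsto (fun k => (⟪v, D k⟫:ℝ)) atTop (nhds 0) := by
    have h5 : Tendsto (fun k => (⟪v, D k⟫:ℝ)) atTop (nhds (⟪v, p0 - q0⟫:ℝ)) :=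
      tendsto_const_nhds.inner hDt
    rwa [hvD] at h5
  have hDsq0 : ‖p0 - q0‖^2 = 4 := by
    rw [norm_sub_sq_real, hp0n, hq0n, hpq0]; ring
  have hden : Tendsto (fun k => ‖D k‖^2) atTop (nhds 4) := by
    have := (hDt.norm).pow 2
    rwa [hDsq0] at this
  have hwt : Tendsto wk atTop (nhds v) := by
    have hcoef : Tendsto (fun k => ⟪v, D k⟫ / ‖D k‖^2) atTop (nhds 0) := by
      have := hnum.div hden (by norm_num)
      rw [zero_div] at this; exact this
    have := (tendsto_const_nhds (x := v) (f := atTop (α := ℕ))).sub (hcoef.smul hDt)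
    simpa using this
  have hwnorm : Tendsto (fun k => ‖wk k‖) atTop (nhds 1) := by
    have := hwt.norm
    rwa [hv1] at this
  have hmt : Tendsto m atTop (nhds v) := by
    have := (hwnorm.inv₀ (by norm_num)).smul hwt
    simpa using this
  -- eventual facts
  have Ew : ∀ᶠ k in atTop, (1:ℝ)/2 ≤ ‖wk k‖ := hwnorm.eventually_const_le (by norm_num)
  have hPmt : Tendsto (fun k => (⟪p (φ k), m k⟫:ℝ)) atTop (nhds 0) := by
    have h5 : Tendsto (fun k => (⟪p (φ k), m k⟫:ℝ)) atTop (nhds (⟪p0, v⟫:ℝ)) :=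
      hPt.inner hmt
    rwa [hv2] at h5
  have E4 : ∀ᶠ k in atTop, (⟪p (φ k), m k⟫:ℝ) < 1 :=
    hPmt.eventually_lt_const (by norm_num)
  have hρv : rho p0 v = π/2 := by rw [rho, hv2, Real.arccos_zero]
  have hρvq : rho v q0 = π/2 := by rw [rho, hvq0, Real.arccos_zero]
  have hsinPm : Tendsto (fun k => Real.sin (rho (p (φ k)) (m k))) atTop (nhds 1) := by
    have := (Real.continuous_sin.tendsto _).comp (tendsto_rho _ _ _ _ hPt hmt)
    rwa [hρv, Real.sin_pi_div_two] at this
  have hsinmQ : Tendsto (fun k => Real.sin (rho (m k) (q (φ k)))) atTop (nhds 1) := by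
    have := (Real.continuous_sin.tendsto _).comp (tendsto_rho _ _ _ _ hmt hQt)
    rwa [hρvq, Real.sin_pi_div_two] at this
  have E5a : ∀ᶠ k in atTop, (1:ℝ)/2 ≤ Real.sin (rho (p (φ k)) (m k)) :=
    hsinPm.eventually_const_le (by norm_num)
  have E5b : ∀ᶠ k in atTop, (1:ℝ)/2 ≤ Real.sin (rho (m k) (q (φ k))) :=
    hsinmQ.eventually_const_le (by norm_num)
  -- key inner product formula
  have hPwk : ∀ k, (⟪p (φ k), wk k⟫:ℝ)
      = ⟪p (φ k), v⟫ * (1 + ⟪p (φ k), q (φ k)⟫)/2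
        + Real.sin (rho (p (φ k)) (q (φ k))) * ⟪v, w (φ k)⟫ / 2 := by
    intro k
    have hck : Real.cos (rho (p (φ k)) (q (φ k))) = ⟪p (φ k), q (φ k)⟫ :=
      cos_rho (hpn _) (hqn _)
    have f1 : (⟪p (φ k), D k⟫:ℝ) = 1 - ⟪p (φ k), q (φ k)⟫ := by
      rw [hD, inner_sub_right, real_inner_self_eq_norm_sq, hpn]
      ring
    have f3 : (⟪v, q (φ k)⟫:ℝ)
        = ⟪p (φ k), q (φ k)⟫ * ⟪v, p (φ k)⟫
          + Real.sin (rho (p (φ k)) (q (φ k))) * ⟪v, w (φ k)⟫ := by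
      conv_lhs => rw [hw3 (φ k)]
      rw [inner_add_right, real_inner_smul_right, real_inner_smul_right, hck]
    have f2 : (⟪v, D k⟫:ℝ)
        = (1 - ⟪p (φ k), q (φ k)⟫) * ⟪v, p (φ k)⟫
          - Real.sin (rho (p (φ k)) (q (φ k))) * ⟪v, w (φ k)⟫ := by
      rw [hD, inner_sub_right, f3]
      ring
    have f5 : (⟪p (φ k), wk k⟫:ℝ)
        = ⟪p (φ k), v⟫ - (⟪v, D k⟫/‖D k‖^2) * ⟪p (φ k), D k⟫ := by
      rw [hwk, inner_sub_right, real_inner_smul_right]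
    have hcomm : (⟪v, p (φ k)⟫:ℝ) = ⟪p (φ k), v⟫ := real_inner_comm _ _
    have key : ∀ A b c s : ℝ, c < 1 →
        A - (((1-c)*A - s*b)/(2-2*c)) * (1-c) = A*(1+c)/2 + s*b/2 := by
      intro A b c s hc
      have h2 : (2:ℝ)-2*c ≠ 0 := by intro hz; nlinarith
      have h3 : (1:ℝ)-c ≠ 0 := by intro hz; nlinarith
      field_simp
      ring
    rw [f5, f1, f2, hDsq k, hcomm]
    exact key _ _ _ _ (hPQlt k)
  -- eventual nonnegativity of ⟪p, m⟫
  have hWvt : Tendsto (fun k => (⟪v, w (φ k)⟫:ℝ)) atTop (nhds c0) := by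
    have h5 : Tendsto (fun k => (⟪v, w (φ k)⟫:ℝ)) atTop (nhds (⟪v, e2⟫:ℝ)) :=
      tendsto_const_nhds.inner hWt
    have h6 : (⟪v, e2⟫:ℝ) = c0 := by rw [hc0]; exact real_inner_comm _ _
    rwa [h6] at h5
  have Ec : ∀ᶠ k in atTop, c0/2 ≤ ⟪v, w (φ k)⟫ :=
    hWvt.eventually (eventually_ge_nhds (by linarith))
  have Ex : ∀ᶠ k : ℕ in atTop, (1:ℝ)/((k:ℝ)+1) ≤ min 1 (3*c0/4) :=
    hinv0.eventually (eventually_le_nhds (lt_min one_pos (by linarith)))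
  have Epos : ∀ᶠ k in atTop, (0:ℝ) ≤ ⟪p (φ k), m k⟫ := by
    filter_upwards [Ec, Ex] with k hkc hkx
    have hwknn : (0:ℝ) ≤ ⟪p (φ k), wk k⟫ := by
      set x : ℝ := π - rho (p (φ k)) (q (φ k)) with hxdef
      have hx0 : 0 ≤ x := by
        have := hle (φ k); rw [hxdef]; linarith
      have hx1 : x ≤ 1/((k:ℝ)+1) := by rw [hxdef]; linarith [hxk k]
      have hxle1 : x ≤ 1 := le_trans hx1 (le_trans hkx (min_le_left _ _))
      have hxlec : x ≤ 3*c0/4 := le_trans hx1 (le_trans hkx (min_le_right _ _))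
      have hρeq : rho (p (φ k)) (q (φ k)) = π - x := by rw [hxdef]; ring
      have hcos : (⟪p (φ k), q (φ k)⟫:ℝ) = -Real.cos x := by
        rw [← cos_rho (hpn _) (hqn _), hρeq, Real.cos_pi_sub]
      have hsin : Real.sin (rho (p (φ k)) (q (φ k))) = Real.sin x := by
        rw [hρeq, Real.sin_pi_sub]
      rw [hPwk k, hcos, hsin]
      have hb1 : 1 - Real.cos x ≤ x^2/2 := by
        nlinarith [Real.one_sub_sq_div_two_le_cos (x := x)]
      have hb2 : (3:ℝ)/4 * x ≤ Real.sin x := by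
        rcases eq_or_lt_of_le hx0 with heq0|hlt0
        · rw [← heq0]; simp
        · nlinarith [Real.sin_gt_sub_cube hlt0, mul_nonneg hx0 (mul_nonneg hx0 (by linarith : (0:ℝ) ≤ 1 - x))]
      have hPv := abs_le.1 (inner_le_one' (hpn (φ k)) hv1)
      have hcle : 1 - Real.cos x ≥ 0 := by nlinarith [Real.cos_le_one x]
      have hwpos : (0:ℝ) ≤ ⟪v, w (φ k)⟫ := by linarith
      nlinarith [mul_nonneg (by linarith [hPv.1] : (0:ℝ) ≤ 1 + ⟪p (φ k), v⟫) hcle,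
        mul_nonneg (by linarith : (0:ℝ) ≤ Real.sin x - 3/4*x) hwpos,
        mul_nonneg (by linarith : (0:ℝ) ≤ (3:ℝ)/4*x) (by linarith : (0:ℝ) ≤ ⟪v, w (φ k)⟫ - c0/2),
        mul_nonneg hx0 (by linarith : (0:ℝ) ≤ 3*c0/4 - x)]
    have : (⟪p (φ k), m k⟫:ℝ) = ‖wk k‖⁻¹ * ⟪p (φ k), wk k⟫ := by
      rw [hm, real_inner_smul_right]
    rw [this]
    exact mul_nonneg (inv_nonneg.2 (norm_nonneg _)) hwknn
  -- integral convergence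
  have hsv : Real.sin (rho p0 v) ≠ 0 := by
    rw [hρv, Real.sin_pi_div_two]; norm_num
  have hsvq : Real.sin (rho v q0) ≠ 0 := by
    rw [hρvq, Real.sin_pi_div_two]; norm_num
  have hI1 := tendsto_Iint hg (fun k => p (φ k)) m p0 v hPt hmt hsv
  have hI2 := tendsto_Iint hg m (fun k => q (φ k)) v q0 hmt hQt hsvq
  have hlim : Iint g p0 v + Iint g v q0 < -ν := by
    rw [hq0e, Iint_split hg hv2]
    have hcongr : (∫ t in (0:ℝ)..π, g (geo p0 v t)) = ∫ t in (0:ℝ)..π, f (geo p0 v t) :=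
      intervalIntegral.integral_congr fun t _ => hgf _ (norm_geo hp0n hv1 hv2 t)
    rw [hcongr]
    exact hvint
  have E6 : ∀ᶠ k in atTop, Iint g (p (φ k)) (m k) + Iint g (m k) (q (φ k)) < -ν :=
    (hI1.add hI2).eventually_lt_const hlim
  -- pick an index where everything holds
  obtain ⟨k, hk1, hk4, hk5a, hk5b, hkpos, hk6⟩ :=
    (Ew.and (E4.and (E5a.and (E5b.and (Epos.and E6))))).exists
  have hwkne : ‖wk k‖ ≠ 0 := by linarith
  have hmu : ‖m k‖ = 1 := by
    rw [hm, norm_smul, norm_inv, norm_norm]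
    field_simp
  have hmmem : m k ∈ sphere2 := hmu
  have h0lt : 0 < rho (p (φ k)) (m k) := Real.arccos_pos.2 hk4
  have heqk : rho (p (φ k)) (m k) = rho (m k) (q (φ k)) := hreq k
  have hsum : rho (p (φ k)) (m k) + rho (m k) (q (φ k)) ≤ π := by
    have hle2 : rho (p (φ k)) (m k) ≤ π/2 := Real.arccos_le_pi_div_two.2 hkpos
    rw [← heqk]
    linarith
  have hfk := hfail (φ k) (m k) hmmem h0lt heqk hsum
  have hs1 : Real.sin (rho (p (φ k)) (m k)) ≠ 0 := by linarith
  have hs2 : Real.sin (rho (m k) (q (φ k))) ≠ 0 := by linarith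
  have c1 : Iint f (p (φ k)) (m k) = Iint g (p (φ k)) (m k) :=
    intervalIntegral.integral_congr fun t _ =>
      (hgf _ (norm_arcPath (hpn _) hmu hs1 t)).symm
  have c2 : Iint f (m k) (q (φ k)) = Iint g (m k) (q (φ k)) :=
    intervalIntegral.integral_congr fun t _ =>
      (hgf _ (norm_arcPath hmu (hqn _) hs2 t)).symm
  rw [c1, c2] at hfk
  linarith
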